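/- Let G be a group, n a natural number, π : FreeGroup (Fin n) →* G a surjective group homomorphism, and R a finite subset of ker π whose normal closure equals ker π. Let Z be the ℂ-vector space of all functions τ : Fin n → G → ℂ such that each τ i is finitely supported and the π-twisted free extension T̃ of τ satisfies T̃(r, a) = 0 for every r ∈ R and a ∈ G; let B ⊆ Z be the subspace of those τ for which there exists a finitely supported t : G → ℂ with τ i a = t(π(FreeGroup.of i)·a·π(FreeGroup.of i)⁻¹) − t(a) for all i and a. Then the map sending a derivation X of ℂ[G] to the function (i, a) ↦ T^X(π(FreeGroup.of i), a) induces a ℂ-linear isomorphism from the quotient of the space of derivations of ℂ[G] by the subspace of inner derivations onto the quotient Z/B. -/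

import Mathlib

namespace GroupAlgebraOut

variable {G : Type*} [Group G] {n : ℕ}

/-- Auxiliary group: pairs `(f, w)` with the `π`-twisted multiplication
`(f₂, w₂)·(f₁, w₁) = (a ↦ f₂(π w₁ · a · π w₁⁻¹) + f₁ a, w₂·w₁)`. -/
@[ext] structure TwProd (π : FreeGroup (Fin n) →* G) : Type _ where
  f : G → ℂ
  w : FreeGroup (Fin n)

namespace TwProd

variable {π : FreeGroup (Fin n) →* G}

instance : Mul (TwProd π) :=
  ⟨fun x y => ⟨fun a => x.f (π y.w * a * (π y.w)⁻¹) + y.f a, x.w * y.w⟩⟩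

instance : One (TwProd π) := ⟨⟨0, 1⟩⟩

instance : Inv (TwProd π) :=
  ⟨fun x => ⟨fun a => -x.f ((π x.w)⁻¹ * a * π x.w), x.w⁻¹⟩⟩

@[simp] lemma mul_f (x y : TwProd π) :
    (x * y).f = fun a => x.f (π y.w * a * (π y.w)⁻¹) + y.f a := rfl

@[simp] lemma mul_w (x y : TwProd π) : (x * y).w = x.w * y.w := rfl

@[simp] lemma one_f : (1 : TwProd π).f = 0 := rfl

@[simp] lemma one_w : (1 : TwProd π).w = 1 := rfl

@[simp] lemma inv_f (x : TwProd π) :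
    x⁻¹.f = fun a => -x.f ((π x.w)⁻¹ * a * π x.w) := rfl

@[simp] lemma inv_w (x : TwProd π) : x⁻¹.w = x.w⁻¹ := rfl

instance : Group (TwProd π) where
  mul_assoc x y z := by
    refine TwProd.ext (funext fun a => ?_) ?_
    · simp [mul_assoc, mul_inv_rev, add_assoc]
    · simp [mul_assoc]
  one_mul x := by
    refine TwProd.ext (funext fun a => ?_) ?_ <;> simp
  mul_one x := by
    refine TwProd.ext (funext fun a => ?_) ?_ <;> simp
  inv_mul_cancel x := by
    refine TwProd.ext (funext fun a => ?_) ?_ <;> simp [mul_assoc]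

end TwProd

/-- The `π`-twisted free extension of `τ : Fin n → G → ℂ`: the unique function
`T̃ : FreeGroup (Fin n) → G → ℂ` with `T̃(of i, a) = τ i a` and
`T̃(w₂·w₁, a) = T̃(w₂, π(w₁)·a·π(w₁)⁻¹) + T̃(w₁, a)`. -/
noncomputable def extChar (π : FreeGroup (Fin n) →* G) (τ : Fin n → G → ℂ) :
    FreeGroup (Fin n) → G → ℂ :=
  fun w => (FreeGroup.lift (fun i => (⟨τ i, FreeGroup.of i⟩ : TwProd π)) w).f

lemma lift_w (π : FreeGroup (Fin n) →* G) (τ : Fin n → G → ℂ) (w : FreeGroup (Fin n)) :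
    (FreeGroup.lift (fun i => (⟨τ i, FreeGroup.of i⟩ : TwProd π)) w).w = w := by
  have h : (MonoidHom.mk' (TwProd.w (π := π)) (fun x y => rfl)).comp
        (FreeGroup.lift (fun i => (⟨τ i, FreeGroup.of i⟩ : TwProd π)))
      = MonoidHom.id (FreeGroup (Fin n)) := by
    refine FreeGroup.ext_hom _ _ fun i => ?_
    simp
  exact DFunLike.congr_fun h w

lemma extChar_of (π : FreeGroup (Fin n) →* G) (τ : Fin n → G → ℂ) (i : Fin n) (a : G) :
    extChar π τ (FreeGroup.of i) a = τ i a := by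
  simp [extChar]

lemma extChar_cocycle (π : FreeGroup (Fin n) →* G) (τ : Fin n → G → ℂ)
    (w₁ w₂ : FreeGroup (Fin n)) (a : G) :
    extChar π τ (w₂ * w₁) a = extChar π τ w₂ (π w₁ * a * (π w₁)⁻¹) + extChar π τ w₁ a := by
  simp [extChar, map_mul, lift_w]

lemma extChar_unique (π : FreeGroup (Fin n) →* G) (τ : Fin n → G → ℂ)
    (T : FreeGroup (Fin n) → G → ℂ)
    (h1 : ∀ (i : Fin n) (a : G), T (FreeGroup.of i) a = τ i a)
    (h2 : ∀ (w₁ w₂ : FreeGroup (Fin n)) (a : G),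
      T (w₂ * w₁) a = T w₂ (π w₁ * a * (π w₁)⁻¹) + T w₁ a) :
    T = extChar π τ := by
  have h : MonoidHom.mk' (fun w => (⟨T w, w⟩ : TwProd π))
        (fun x y => TwProd.ext (funext fun a => h2 y x a) rfl)
      = FreeGroup.lift (fun i => (⟨τ i, FreeGroup.of i⟩ : TwProd π)) := by
    refine FreeGroup.ext_hom _ _ fun i => ?_
    simp only [MonoidHom.mk'_apply, FreeGroup.lift_apply_of]
    exact TwProd.ext (funext fun a => h1 i a) rfl
  funext w a
  have := DFunLike.congr_fun h w
  exact congrFun (congrArg TwProd.f this) a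

lemma extChar_add (π : FreeGroup (Fin n) →* G) (τ σ : Fin n → G → ℂ) :
    extChar π (τ + σ) = extChar π τ + extChar π σ := by
  refine (extChar_unique π (τ + σ) (extChar π τ + extChar π σ) ?_ ?_).symm
  · intro i a; simp [extChar_of]
  · intro w₁ w₂ a
    simp only [Pi.add_apply, extChar_cocycle]
    ring

lemma extChar_smul (π : FreeGroup (Fin n) →* G) (c : ℂ) (τ : Fin n → G → ℂ) :
    extChar π (c • τ) = c • extChar π τ := by
  refine (extChar_unique π (c • τ) (c • extChar π τ) ?_ ?_).symm
  · intro i a; simp [extChar_of]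
  · intro w₁ w₂ a
    simp only [Pi.smul_apply, extChar_cocycle, smul_eq_mul]
    ring

lemma extChar_zero (π : FreeGroup (Fin n) →* G) :
    extChar π (0 : Fin n → G → ℂ) = 0 := by
  refine (extChar_unique π 0 0 ?_ ?_).symm <;> intro <;> simp


variable (G)

/-- Type wrapper for the space of `ℂ`-linear endomorphisms of the group algebra `ℂ[G]`. -/
def EndCG : Type _ := MonoidAlgebra ℂ G →ₗ[ℂ] MonoidAlgebra ℂ G

noncomputable instance : AddCommGroup (EndCG G) :=
  inferInstanceAs (AddCommGroup (MonoidAlgebra ℂ G →ₗ[ℂ] MonoidAlgebra ℂ G))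

noncomputable instance : Module ℂ (EndCG G) :=
  inferInstanceAs (Module ℂ (MonoidAlgebra ℂ G →ₗ[ℂ] MonoidAlgebra ℂ G))

instance : FunLike (EndCG G) (MonoidAlgebra ℂ G) (MonoidAlgebra ℂ G) :=
  inferInstanceAs (FunLike (MonoidAlgebra ℂ G →ₗ[ℂ] MonoidAlgebra ℂ G) _ _)

variable {G}

@[simp] lemma EndCG.add_apply (X Y : EndCG G) (u : MonoidAlgebra ℂ G) :
    (X + Y) u = X u + Y u := rfl

@[simp] lemma EndCG.smul_apply (c : ℂ) (X : EndCG G) (u : MonoidAlgebra ℂ G) :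
    (c • X) u = c • X u := rfl

@[simp] lemma EndCG.zero_apply (u : MonoidAlgebra ℂ G) : (0 : EndCG G) u = 0 := rfl

variable (G)

/-- The space of derivations of the group algebra `ℂ[G]`, i.e. `ℂ`-linear maps
`X : ℂ[G] → ℂ[G]` with `X(u·v) = X(u)·v + u·X(v)`, as a submodule of the endomorphisms. -/
noncomputable def Der : Submodule ℂ (EndCG G) where
  carrier := {X | ∀ u v : MonoidAlgebra ℂ G, X (u * v) = X u * v + u * X v}
  add_mem' := by
    intro X Y hX hY u v
    simp only [EndCG.add_apply, hX u v, hY u v, add_mul, mul_add]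
    abel
  zero_mem' := by intro u v; simp
  smul_mem' := by
    intro c X hX u v
    simp only [EndCG.smul_apply, hX u v, smul_add, smul_mul_assoc, mul_smul_comm]

variable {G}

/-- The inner derivation `ad u : v ↦ u·v − v·u` of `ℂ[G]`. -/
noncomputable def adL (u : MonoidAlgebra ℂ G) : EndCG G :=
  (LinearMap.mulLeft ℂ u - LinearMap.mulRight ℂ u :
    MonoidAlgebra ℂ G →ₗ[ℂ] MonoidAlgebra ℂ G)

lemma adL_apply (u v : MonoidAlgebra ℂ G) : adL u v = u * v - v * u := rfl

variable (G)

/-- The subspace of inner derivations inside the space of derivations of `ℂ[G]`. -/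
noncomputable def Inn : Submodule ℂ ↥(Der G) where
  carrier := {X | ∃ u : MonoidAlgebra ℂ G, (X : EndCG G) = adL u}
  add_mem' := by
    rintro X Y ⟨u, hu⟩ ⟨v, hv⟩
    refine ⟨u + v, ?_⟩
    refine DFunLike.ext _ _ fun w => ?_
    have hX : (X : EndCG G) w = u * w - w * u := by rw [hu, adL_apply]
    have hY : (Y : EndCG G) w = v * w - w * v := by rw [hv, adL_apply]
    have : ((X + Y : ↥(Der G)) : EndCG G) w = (X : EndCG G) w + (Y : EndCG G) w := rfl
    rw [this, hX, hY, adL_apply, add_mul, mul_add]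
    abel
  zero_mem' := by
    refine ⟨0, ?_⟩
    refine DFunLike.ext _ _ fun w => ?_
    have : ((0 : ↥(Der G)) : EndCG G) w = 0 := rfl
    rw [this, adL_apply]
    simp
  smul_mem' := by
    rintro c X ⟨u, hu⟩
    refine ⟨c • u, ?_⟩
    refine DFunLike.ext _ _ fun w => ?_
    have hX : (X : EndCG G) w = u * w - w * u := by rw [hu, adL_apply]
    have : ((c • X : ↥(Der G)) : EndCG G) w = c • (X : EndCG G) w := rfl
    rw [this, hX, adL_apply]
    simp [smul_sub, smul_mul_assoc, mul_smul_comm]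

variable {G}

/-- The space `Z` of locally finitely supported cocycle data on the generators:
functions `τ : Fin n → G → ℂ` with each `τ i` finitely supported whose `π`-twisted
free extension vanishes on the set `R` of relations. -/
noncomputable def Z (π : FreeGroup (Fin n) →* G) (R : Set (FreeGroup (Fin n))) :
    Submodule ℂ (Fin n → G → ℂ) where
  carrier := {τ | (∀ i : Fin n, {a : G | τ i a ≠ 0}.Finite) ∧
    ∀ r ∈ R, ∀ a : G, extChar π τ r a = 0}
  add_mem' := by
    rintro τ σ ⟨hf1, hv1⟩ ⟨hf2, hv2⟩
    constructor
    · intro i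
      refine ((hf1 i).union (hf2 i)).subset fun a ha => ?_
      by_contra h
      simp only [Set.mem_union, Set.mem_setOf_eq, not_or, not_not, ne_eq] at h
      exact ha (by simp [h.1, h.2])
    · intro r hr a
      rw [extChar_add]
      simp [hv1 r hr a, hv2 r hr a]
  zero_mem' := by
    constructor
    · intro i; simp
    · intro r hr a; rw [extChar_zero]; rfl
  smul_mem' := by
    rintro c τ ⟨hf, hv⟩
    constructor
    · intro i
      refine (hf i).subset fun a ha => ?_
      simp only [Set.mem_setOf_eq, Pi.smul_apply, smul_eq_mul, ne_eq] at ha ⊢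
      intro h
      exact ha (by simp [h])
    · intro r hr a
      rw [extChar_smul]
      simp [hv r hr a]

/-- The subspace `B ⊆ Z` of coboundaries: data of the form
`τ i a = t(s_i·a·s_i⁻¹) − t(a)` for a finitely supported `t : G → ℂ`,
where `s_i = π(of i)`. -/
noncomputable def B (π : FreeGroup (Fin n) →* G) (R : Set (FreeGroup (Fin n))) :
    Submodule ℂ ↥(Z π R) where
  carrier := {τ | ∃ t : G → ℂ, {a : G | t a ≠ 0}.Finite ∧
    ∀ (i : Fin n) (a : G), (τ : Fin n → G → ℂ) i a =
      t (π (FreeGroup.of i) * a * (π (FreeGroup.of i))⁻¹) - t a}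
  add_mem' := by
    rintro τ σ ⟨t, ht, hts⟩ ⟨s, hs, hss⟩
    refine ⟨t + s, ?_, ?_⟩
    · refine (ht.union hs).subset fun a ha => ?_
      by_contra h
      simp only [Set.mem_union, Set.mem_setOf_eq, not_or, not_not, ne_eq] at h
      exact ha (by simp [h.1, h.2])
    · intro i a
      have : ((τ + σ : ↥(Z π R)) : Fin n → G → ℂ) i a =
          (τ : Fin n → G → ℂ) i a + (σ : Fin n → G → ℂ) i a := rfl
      rw [this, hts i a, hss i a]
      simp only [Pi.add_apply]
      ring
  zero_mem' := by
    refine ⟨0, by simp, ?_⟩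
    intro i a
    simp
  smul_mem' := by
    rintro c τ ⟨t, ht, hts⟩
    refine ⟨c • t, ?_, ?_⟩
    · refine ht.subset fun a ha => ?_
      simp only [Set.mem_setOf_eq, Pi.smul_apply, smul_eq_mul, ne_eq] at ha ⊢
      intro h
      exact ha (by simp [h])
    · intro i a
      have : ((c • τ : ↥(Z π R)) : Fin n → G → ℂ) i a =
          c • (τ : Fin n → G → ℂ) i a := rfl
      rw [this, hts i a]
      simp only [Pi.smul_apply, smul_eq_mul]
      ring


section Aux

variable {π : FreeGroup (Fin n) →* G}

/-- The character of an endomorphism of `ℂ[G]`. -/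
noncomputable def TX (X : EndCG G) (g a : G) : ℂ :=
  (X (MonoidAlgebra.single g 1)).coeff (g * a)

lemma der_one (X : EndCG G) (hX : X ∈ Der G) : X 1 = 0 := by
  have h := hX 1 1
  rw [one_mul, mul_one, one_mul] at h
  exact add_eq_right.mp h.symm

lemma TX_one (X : EndCG G) (hX : X ∈ Der G) (a : G) : TX X 1 a = 0 := by
  unfold TX
  rw [← MonoidAlgebra.one_def, der_one X hX]
  rfl

lemma TX_cocycle (X : EndCG G) (hX : X ∈ Der G) (g h a : G) :
    TX X (g * h) a = TX X g (h * a * h⁻¹) + TX X h a := by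
  unfold TX
  have h1 : (MonoidAlgebra.single (g*h) (1:ℂ) : MonoidAlgebra ℂ G)
      = MonoidAlgebra.single g 1 * MonoidAlgebra.single h 1 := by
    rw [MonoidAlgebra.single_mul_single, one_mul]
  rw [h1, hX]
  rw [MonoidAlgebra.coeff_add, Finsupp.add_apply, MonoidAlgebra.coeff_mul_single_apply,
    MonoidAlgebra.coeff_single_mul_apply]
  rw [mul_one, one_mul]
  congr 2
  · group
  · group

lemma extChar_eq_TX (X : EndCG G) (hX : X ∈ Der G) :
    extChar π (fun i a => TX X (π (FreeGroup.of i)) a)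
      = fun w a => TX X (π w) a := by
  refine (extChar_unique π (fun i a => TX X (π (FreeGroup.of i)) a)
    (fun w a => TX X (π w) a) (fun i a => rfl) ?_).symm
  intro w₁ w₂ a
  show TX X (π (w₂ * w₁)) a = TX X (π w₂) (π w₁ * a * (π w₁)⁻¹) + TX X (π w₁) a
  rw [map_mul]
  exact TX_cocycle X hX _ _ _

lemma TX_finite (X : EndCG G) (g : G) : {a : G | TX X g a ≠ 0}.Finite := by
  have h1 : {a : G | TX X g a ≠ 0}
      ⊆ (fun a => g * a) ⁻¹' ((X (MonoidAlgebra.single g 1)).coeff.support : Set G) := by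
    intro a ha
    simp only [Set.mem_preimage, Finset.mem_coe, Finsupp.mem_support_iff]
    exact ha
  exact Set.Finite.subset
    (((X (MonoidAlgebra.single g 1)).coeff.support.finite_toSet).preimage
      (Set.injOn_of_injective (mul_right_injective g))) h1

lemma tauX_mem_Z (R : Set (FreeGroup (Fin n)))
    (hRsub : R ⊆ (π.ker : Set (FreeGroup (Fin n)))) (X : ↥(Der G)) :
    (fun (i : Fin n) (a : G) =>
      ((X : EndCG G) (MonoidAlgebra.single (π (FreeGroup.of i)) 1)).coeff
        (π (FreeGroup.of i) * a)) ∈ Z π R := by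
  constructor
  · intro i
    exact TX_finite (X : EndCG G) (π (FreeGroup.of i))
  · intro r hr a
    have h := extChar_eq_TX (X : EndCG G) X.2 (π := π)
    show extChar π (fun i a => TX (X : EndCG G) (π (FreeGroup.of i)) a) r a = 0
    rw [h]
    have hr1 : π r = 1 := hRsub hr
    simp only [hr1]
    exact TX_one (X : EndCG G) X.2 a

lemma endCG_ext {X X' : EndCG G} (h : ∀ g a, TX X g a = TX X' g a) : X = X' := by
  have hsingle : ∀ g : G, X (MonoidAlgebra.single g 1) = X' (MonoidAlgebra.single g 1) := by
    intro g
    refine MonoidAlgebra.ext (Finsupp.ext fun x => ?_)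
    have hh := h g (g⁻¹ * x)
    unfold TX at hh
    rwa [mul_inv_cancel_left] at hh
  refine DFunLike.ext _ _ fun u => ?_
  refine MonoidAlgebra.induction_linear u ?_ ?_ ?_
  · exact (LinearMap.map_zero (X : MonoidAlgebra ℂ G →ₗ[ℂ] MonoidAlgebra ℂ G)).trans
      (LinearMap.map_zero (X' : MonoidAlgebra ℂ G →ₗ[ℂ] MonoidAlgebra ℂ G)).symm
  · intro f g hf hg
    exact (LinearMap.map_add (X : MonoidAlgebra ℂ G →ₗ[ℂ] MonoidAlgebra ℂ G) f g).trans
      ((congrArg₂ (· + ·) hf hg).trans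
        (LinearMap.map_add (X' : MonoidAlgebra ℂ G →ₗ[ℂ] MonoidAlgebra ℂ G) f g).symm)
  intro g b
  show X (MonoidAlgebra.single g b) = X' (MonoidAlgebra.single g b)
  have hb : (MonoidAlgebra.single g b : MonoidAlgebra ℂ G)
      = b • MonoidAlgebra.single g 1 := by
    rw [MonoidAlgebra.smul_single', mul_one]
  rw [hb]
  exact (LinearMap.map_smul (X : MonoidAlgebra ℂ G →ₗ[ℂ] MonoidAlgebra ℂ G) b _).trans
    ((congrArg (b • ·) (hsingle g)).trans
      (LinearMap.map_smul (X' : MonoidAlgebra ℂ G →ₗ[ℂ] MonoidAlgebra ℂ G) b _).symm)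

lemma adL_mem_Der (u : MonoidAlgebra ℂ G) : adL u ∈ Der G := by
  intro v w
  simp only [adL_apply]
  noncomm_ring

lemma TX_adL (u : MonoidAlgebra ℂ G) (g a : G) :
    TX (adL u) g a = u.coeff (g * a * g⁻¹) - u.coeff a := by
  unfold TX
  rw [adL_apply, MonoidAlgebra.coeff_sub, Finsupp.sub_apply, MonoidAlgebra.coeff_mul_single_apply,
    MonoidAlgebra.coeff_single_mul_apply, mul_one, one_mul, inv_mul_cancel_left]

lemma TX_ext_of_gen (hπ : Function.Surjective π) (X X' : EndCG G)
    (hX : X ∈ Der G) (hX' : X' ∈ Der G)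
    (h : ∀ (i : Fin n) (a : G), TX X (π (FreeGroup.of i)) a = TX X' (π (FreeGroup.of i)) a) :
    X = X' := by
  set d : G → G → ℂ := fun g a => TX X g a - TX X' g a with hd
  have d_one : ∀ a, d 1 a = 0 := fun a => by
    simp [hd, TX_one X hX, TX_one X' hX']
  have d_mul : ∀ g h a, d (g * h) a = d g (h * a * h⁻¹) + d h a := by
    intro g h a
    simp only [hd, TX_cocycle X hX, TX_cocycle X' hX']
    ring
  have d_inv : ∀ g, (∀ a, d g a = 0) → ∀ a, d g⁻¹ a = 0 := by
    intro g hg a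
    have h2 := d_mul g g⁻¹ a
    rw [mul_inv_cancel, d_one, hg] at h2
    simpa using h2.symm
  have key : ∀ g a, d g a = 0 := by
    intro g
    obtain ⟨w, rfl⟩ := hπ g
    refine FreeGroup.induction_on (C := fun w => ∀ a, d (π w) a = 0) w ?_ ?_ ?_ ?_
    · intro a; rw [map_one]; exact d_one a
    · intro x a
      exact sub_eq_zero.mpr (h x a)
    · intro x hx a
      rw [map_inv]
      exact d_inv _ hx a
    · intro x y hx hy a
      rw [map_mul, d_mul, hx, hy, add_zero]
  apply endCG_ext
  intro g a
  exact sub_eq_zero.mp (key g a)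

noncomputable def PhiAux (R : Set (FreeGroup (Fin n)))
    (hRsub : R ⊆ (π.ker : Set (FreeGroup (Fin n)))) : ↥(Der G) →ₗ[ℂ] ↥(Z π R) where
  toFun X := ⟨fun (i : Fin n) (a : G) =>
      ((X : EndCG G) (MonoidAlgebra.single (π (FreeGroup.of i)) 1)).coeff
        (π (FreeGroup.of i) * a), tauX_mem_Z R hRsub X⟩
  map_add' X Y := Subtype.ext (funext fun i => funext fun a => by
    have h1 : ((X + Y : ↥(Der G)) : EndCG G) = (X : EndCG G) + (Y : EndCG G) := rfl
    show (((X + Y : ↥(Der G)) : EndCG G) _).coeff _ = _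
    rw [h1, EndCG.add_apply, MonoidAlgebra.coeff_add, Finsupp.add_apply]
    rfl)
  map_smul' c X := Subtype.ext (funext fun i => funext fun a => by
    have h1 : ((c • X : ↥(Der G)) : EndCG G) = c • (X : EndCG G) := rfl
    show (((c • X : ↥(Der G)) : EndCG G) _).coeff _ = _
    rw [h1, EndCG.smul_apply, MonoidAlgebra.coeff_smul, Finsupp.smul_apply]
    rfl)

lemma PhiAux_mem_B_iff (hπ : Function.Surjective π) (R : Set (FreeGroup (Fin n)))
    (hRsub : R ⊆ (π.ker : Set (FreeGroup (Fin n)))) (X : ↥(Der G)) :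
    PhiAux R hRsub X ∈ B π R ↔ X ∈ Inn G := by
  constructor
  · rintro ⟨t, ht, hts⟩
    set u : MonoidAlgebra ℂ G := MonoidAlgebra.ofCoeff (Finsupp.ofSupportFinite t ht) with hu
    have hucoe : ∀ x, u.coeff x = t x := fun x => congrFun (Finsupp.ofSupportFinite_coe) x
    refine ⟨u, ?_⟩
    refine TX_ext_of_gen hπ _ _ X.2 (adL_mem_Der u) ?_
    intro i a
    rw [TX_adL, hucoe, hucoe]
    exact hts i a
  · rintro ⟨u, hu⟩
    refine ⟨fun a => u.coeff a, u.coeff.finite_support, ?_⟩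
    intro i a
    show TX (X : EndCG G) (π (FreeGroup.of i)) a = _
    rw [hu, TX_adL]

lemma extChar_one' (τ : Fin n → G → ℂ) (a : G) : extChar π τ 1 a = 0 := by
  simp [extChar]

lemma extChar_inv' (τ : Fin n → G → ℂ) (w : FreeGroup (Fin n)) (a : G) :
    extChar π τ w⁻¹ a = - extChar π τ w ((π w)⁻¹ * a * π w) := by
  simp [extChar, map_inv, lift_w]

lemma conj_injective (c : G) : Function.Injective (fun a : G => c * a * c⁻¹) := by
  intro a b h
  simp only at h
  have := mul_right_cancel h
  exact mul_left_cancel this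

lemma extChar_finite (τ : Fin n → G → ℂ) (hfin : ∀ i, {a : G | τ i a ≠ 0}.Finite)
    (w : FreeGroup (Fin n)) : {a : G | extChar π τ w a ≠ 0}.Finite := by
  refine FreeGroup.induction_on
    (C := fun w => {a : G | extChar π τ w a ≠ 0}.Finite) w ?_ ?_ ?_ ?_
  · refine Set.Finite.subset Set.finite_empty fun a ha => ?_
    exact absurd (extChar_one' τ a) ha
  · intro x
    refine Set.Finite.subset (hfin x) fun a ha => ?_
    have hpure : (pure x : FreeGroup (Fin n)) = FreeGroup.of x := rfl
    rw [Set.mem_setOf_eq, extChar_of] at ha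
    exact ha
  · intro x hx
    have hpure : (pure x : FreeGroup (Fin n)) = FreeGroup.of x := rfl
    refine Set.Finite.subset (hx.preimage
      (Set.injOn_of_injective (conj_injective (π (FreeGroup.of x))⁻¹))) fun a ha => ?_
    simp only [Set.mem_preimage, Set.mem_setOf_eq]
    intro h0
    rw [Set.mem_setOf_eq, extChar_inv' τ (FreeGroup.of x) a] at ha
    refine ha ?_
    rw [inv_inv] at h0
    rw [h0, neg_zero]
  · intro x y hx hy
    refine Set.Finite.subset ((hx.preimage
      (Set.injOn_of_injective (conj_injective (π y)))).union hy) fun a ha => ?_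
    rw [Set.mem_setOf_eq, extChar_cocycle] at ha
    by_contra hcon
    simp only [Set.mem_union, Set.mem_preimage, Set.mem_setOf_eq, not_or, not_not] at hcon
    exact ha (by rw [hcon.1, hcon.2, add_zero])

lemma extChar_ker {R : Set (FreeGroup (Fin n))} (τ : Fin n → G → ℂ) (hτ : τ ∈ Z π R)
    (hRsub : R ⊆ (π.ker : Set (FreeGroup (Fin n))))
    (hRcl : Subgroup.normalClosure R = π.ker) :
    ∀ w ∈ π.ker, ∀ a : G, extChar π τ w a = 0 := by
  let N : Subgroup (FreeGroup (Fin n)) :=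
    { carrier := {w | w ∈ π.ker ∧ ∀ a, extChar π τ w a = 0}
      one_mem' := ⟨one_mem _, fun a => extChar_one' τ a⟩
      mul_mem' := by
        rintro x y ⟨hx1, hx2⟩ ⟨hy1, hy2⟩
        refine ⟨mul_mem hx1 hy1, fun a => ?_⟩
        rw [extChar_cocycle, hx2, hy2, add_zero]
      inv_mem' := by
        rintro x ⟨hx1, hx2⟩
        refine ⟨inv_mem hx1, fun a => ?_⟩
        rw [extChar_inv', hx2, neg_zero] }
  have hN : N.Normal := by
    constructor
    rintro r ⟨hr1, hr2⟩ w
    have hπr : π r = 1 := hr1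
    refine ⟨?_, fun a => ?_⟩
    · show w * r * w⁻¹ ∈ π.ker
      rw [MonoidHom.mem_ker, map_mul, map_mul, hπr, mul_one, map_inv, mul_inv_cancel]
    · have h1 : extChar π τ ((w * r) * w⁻¹) a
          = extChar π τ (w * r) (π w⁻¹ * a * (π w⁻¹)⁻¹) + extChar π τ w⁻¹ a :=
        extChar_cocycle π τ w⁻¹ (w * r) a
      have h2 : extChar π τ (w * r) (π w⁻¹ * a * (π w⁻¹)⁻¹)
          = extChar π τ w (π r * (π w⁻¹ * a * (π w⁻¹)⁻¹) * (π r)⁻¹)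
            + extChar π τ r (π w⁻¹ * a * (π w⁻¹)⁻¹) :=
        extChar_cocycle π τ r w _
      rw [h1, h2, hr2, hπr]
      simp only [one_mul, inv_one, mul_one, add_zero]
      rw [← extChar_cocycle π τ w⁻¹ w a, mul_inv_cancel]
      exact extChar_one' τ a
  haveI := hN
  have hle : Subgroup.normalClosure R ≤ N :=
    Subgroup.normalClosure_le_normal (fun r hr => ⟨hRsub hr, hτ.2 r hr⟩)
  rw [hRcl] at hle
  intro w hw a
  exact (hle hw).2 a

lemma PhiAux_surjective (hπ : Function.Surjective π) {R : Set (FreeGroup (Fin n))}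
    (hRsub : R ⊆ (π.ker : Set (FreeGroup (Fin n))))
    (hRcl : Subgroup.normalClosure R = π.ker) (τZ : ↥(Z π R)) :
    ∃ X : ↥(Der G), PhiAux R hRsub X = τZ := by
  obtain ⟨τ, hτ⟩ := τZ
  have hker := extChar_ker τ hτ hRsub hRcl
  set sec : G → FreeGroup (Fin n) := Function.surjInv hπ with hsec
  have hsecπ : ∀ g, π (sec g) = g := fun g => Function.surjInv_eq hπ g
  set T : G → G → ℂ := fun g => extChar π τ (sec g) with hT
  have hcongr : ∀ (w : FreeGroup (Fin n)) (a : G), extChar π τ w a = T (π w) a := by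
    intro w a
    have hk : sec (π w) * w⁻¹ ∈ π.ker := by
      rw [MonoidHom.mem_ker, map_mul, map_inv, hsecπ, mul_inv_cancel]
    show extChar π τ w a = extChar π τ (sec (π w)) a
    have h1 : extChar π τ (sec (π w)) a = extChar π τ ((sec (π w) * w⁻¹) * w) a := by
      rw [inv_mul_cancel_right]
    rw [h1, extChar_cocycle, hker _ hk, zero_add]
  have hTcoc : ∀ g h a, T (g * h) a = T g (h * a * h⁻¹) + T h a := by
    intro g h a
    have h1 : T (g * h) a = extChar π τ (sec g * sec h) a := by
      rw [hcongr (sec g * sec h) a, map_mul, hsecπ, hsecπ]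
    rw [h1, extChar_cocycle, hcongr, hcongr]
    simp only [hsecπ]
  have hTof : ∀ i : Fin n, T (π (FreeGroup.of i)) = τ i := by
    intro i
    funext a
    rw [← hcongr (FreeGroup.of i) a, extChar_of]
  have hTfin : ∀ g : G, (Function.support (fun x => T g (g⁻¹ * x))).Finite := by
    intro g
    have h1 : Function.support (fun x => T g (g⁻¹ * x))
        ⊆ (fun x => g⁻¹ * x) ⁻¹' {a | T g a ≠ 0} := fun x hx => hx
    refine Set.Finite.subset (Set.Finite.preimage
      (Set.injOn_of_injective (mul_right_injective g⁻¹)) ?_) h1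
    exact extChar_finite τ hτ.1 (sec g)
  set D : G → MonoidAlgebra ℂ G := fun g => MonoidAlgebra.ofCoeff (Finsupp.ofSupportFinite _ (hTfin g)) with hD
  have hDapp : ∀ g x, (D g).coeff x = T g (g⁻¹ * x) := fun g x =>
    congrFun (Finsupp.ofSupportFinite_coe) x
  have hDmul : ∀ g h : G, D (g * h)
      = D g * MonoidAlgebra.single h 1 + MonoidAlgebra.single g 1 * D h := by
    intro g h
    refine MonoidAlgebra.ext (Finsupp.ext fun x => ?_)
    rw [MonoidAlgebra.coeff_add, Finsupp.add_apply, MonoidAlgebra.coeff_mul_single_apply,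
      MonoidAlgebra.coeff_single_mul_apply,
      mul_one, one_mul, hDapp, hDapp, hDapp, hTcoc]
    have e1 : h * ((g * h)⁻¹ * x) * h⁻¹ = g⁻¹ * (x * h⁻¹) := by group
    have e2 : (g * h)⁻¹ * x = h⁻¹ * (g⁻¹ * x) := by group
    rw [e1, e2]
  set Xmap : EndCG G :=
    ((Finsupp.lsum ℂ (fun g => LinearMap.toSpanSingleton ℂ (MonoidAlgebra ℂ G) (D g)) :
      (G →₀ ℂ) →ₗ[ℂ] MonoidAlgebra ℂ G).comp (MonoidAlgebra.coeffLinearEquiv ℂ).toLinearMap)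
      with hX
  have hXsingle : ∀ (g : G) (c : ℂ), Xmap (MonoidAlgebra.single g c) = c • D g := by
    intro g c
    rw [hX]
    show (Finsupp.lsum ℂ (fun g => LinearMap.toSpanSingleton ℂ (MonoidAlgebra ℂ G) (D g)))
      (Finsupp.single g c) = c • D g
    rw [Finsupp.lsum_single]
    rfl
  have hs : ∀ (e : G) (r : ℂ), (MonoidAlgebra.single e r : MonoidAlgebra ℂ G)
      = r • MonoidAlgebra.single e 1 := by
    intro e r
    rw [MonoidAlgebra.smul_single', mul_one]
  have hs' : ∀ (e : G) (r : ℂ), (MonoidAlgebra.single e r : MonoidAlgebra ℂ G)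
      = r • MonoidAlgebra.single e 1 := hs
  have hz : Xmap (0 : MonoidAlgebra ℂ G) = 0 :=
    LinearMap.map_zero (Xmap : MonoidAlgebra ℂ G →ₗ[ℂ] MonoidAlgebra ℂ G)
  have hadd : ∀ f g : MonoidAlgebra ℂ G, Xmap (f + g) = Xmap f + Xmap g := fun f g =>
    LinearMap.map_add (Xmap : MonoidAlgebra ℂ G →ₗ[ℂ] MonoidAlgebra ℂ G) f g
  have hXder : Xmap ∈ Der G := by
    have main : ∀ u v : MonoidAlgebra ℂ G, Xmap (u * v) = Xmap u * v + u * Xmap v := by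
      intro u
      refine MonoidAlgebra.induction_linear
        (motive := fun u : MonoidAlgebra ℂ G => ∀ v : MonoidAlgebra ℂ G,
          Xmap (u * v) = Xmap u * v + u * Xmap v) u ?_ ?_ ?_
      · intro v; simp [hz]
      · intro f g hf hg v
        rw [add_mul, hadd, hadd, hf, hg, add_mul, add_mul]
        abel
      · intro a b v
        refine MonoidAlgebra.induction_linear
          (motive := fun v : MonoidAlgebra ℂ G =>
            Xmap (MonoidAlgebra.single a b * v)
              = Xmap (MonoidAlgebra.single a b) * v
                + MonoidAlgebra.single a b * Xmap v) v ?_ ?_ ?_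
        · simp [hz]
        · intro f g hf hg
          rw [mul_add, hadd, hadd, hf, hg, mul_add, mul_add]
          abel
        · intro c d
          show Xmap (MonoidAlgebra.single a b * MonoidAlgebra.single c d) = _
          rw [MonoidAlgebra.single_mul_single, hXsingle, hXsingle, hXsingle, hDmul,
            hs' c d, hs a b]
          simp only [smul_add, smul_mul_assoc, mul_smul_comm, smul_smul]
          module
    exact main
  refine ⟨⟨Xmap, hXder⟩, ?_⟩
  refine Subtype.ext (funext fun i => funext fun a => ?_)
  show (Xmap (MonoidAlgebra.single (π (FreeGroup.of i)) 1)).coeff (π (FreeGroup.of i) * a) = τ i a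
  rw [hXsingle, one_smul, hDapp, inv_mul_cancel_left, hTof]

end Aux

/-- **Main theorem.** Given a finite presentation `π : FreeGroup (Fin n) ↠ G` of a
group `G` with a finite set of relations `R ⊆ ker π` whose normal closure is `ker π`,
the map sending a derivation `X` of `ℂ[G]` to its character data
`(i, a) ↦ T^X(π(of i), a)` on the generators induces a `ℂ`-linear isomorphism from
the space of outer derivations `Out(ℂ[G]) = Der(ℂ[G])/Int(ℂ[G])` onto the quotient
`Z/B` (the first cohomology with finite supports of the Cayley complex of the groupoid
of the adjoint action of `G`). -/
theorem out_equiv_cohomology (π : FreeGroup (Fin n) →* G) (hπ : Function.Surjective π)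
    (R : Set (FreeGroup (Fin n))) (hRfin : R.Finite)
    (hRsub : R ⊆ (π.ker : Set (FreeGroup (Fin n))))
    (hRcl : Subgroup.normalClosure R = π.ker) :
    ∃ (hZ : ∀ X : ↥(Der G),
        (fun (i : Fin n) (a : G) =>
          ((X : EndCG G) (MonoidAlgebra.single (π (FreeGroup.of i)) 1)).coeff
            (π (FreeGroup.of i) * a)) ∈ Z π R)
      (e : (↥(Der G) ⧸ Inn G) ≃ₗ[ℂ] (↥(Z π R) ⧸ B π R)),
      ∀ X : ↥(Der G),
        e (Submodule.Quotient.mk X) =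
          Submodule.Quotient.mk
            (⟨fun (i : Fin n) (a : G) =>
                ((X : EndCG G) (MonoidAlgebra.single (π (FreeGroup.of i)) 1)).coeff
                  (π (FreeGroup.of i) * a),
              hZ X⟩ : ↥(Z π R)) := by
  refine ⟨tauX_mem_Z R hRsub, ?_⟩
  set Φ := PhiAux (π := π) R hRsub with hΦ
  set ψ : ↥(Der G) →ₗ[ℂ] (↥(Z π R) ⧸ B π R) := (B π R).mkQ.comp Φ with hψ
  have hker : LinearMap.ker ψ = Inn G := by
    ext X
    rw [LinearMap.mem_ker, hψ]
    show (B π R).mkQ (Φ X) = 0 ↔ X ∈ Inn G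
    rw [Submodule.mkQ_apply, Submodule.Quotient.mk_eq_zero]
    exact PhiAux_mem_B_iff hπ R hRsub X
  have hinj : Function.Injective (Submodule.liftQ (Inn G) ψ hker.ge) := by
    rw [← LinearMap.ker_eq_bot]
    exact Submodule.ker_liftQ_eq_bot (Inn G) ψ hker.ge hker.le
  have hsurj : Function.Surjective (Submodule.liftQ (Inn G) ψ hker.ge) := by
    intro y
    obtain ⟨z, rfl⟩ := Submodule.mkQ_surjective (B π R) y
    obtain ⟨X, hX⟩ := PhiAux_surjective hπ hRsub hRcl z
    refine ⟨Submodule.Quotient.mk X, ?_⟩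
    rw [Submodule.liftQ_apply]
    show (B π R).mkQ (Φ X) = _
    rw [hX]
  refine ⟨LinearEquiv.ofBijective _ ⟨hinj, hsurj⟩, ?_⟩
  intro X
  show Submodule.liftQ (Inn G) ψ hker.ge (Submodule.Quotient.mk X) = _
  rw [Submodule.liftQ_apply]
  rfl

end GroupAlgebraOut
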